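/- Let k₀ ∈ ℝ^d, let U ⊂ ℂ^d be an open ball centered at k₀, and let f : U → ℂ be holomorphic. Assume that f(k) ∈ ℝ for every k ∈ U ∩ ℝ^d, and that f(k₀ + z) = f(k₀ − z) whenever k₀ + z and k₀ − z both lie in U. Then f(k₀ + iβ) ∈ ℝ for every β ∈ ℝ^d with k₀ + iβ ∈ U. -/

import Mathlib

open Metric

/-- The natural embedding of `ℝ^d` as the set of real points of `ℂ^d`. -/
def toCplx {d : ℕ} (v : EuclideanSpace ℝ (Fin d)) : EuclideanSpace ℂ (Fin d) :=
  WithLp.toLp 2 (fun i => (v i : ℂ))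

open Complex in
lemma hasDerivAt_conj_comp {g : ℂ → ℂ} {c z : ℂ}
    (h : HasDerivAt g c ((starRingEnd ℂ) z)) :
    HasDerivAt (fun w => (starRingEnd ℂ) (g ((starRingEnd ℂ) w))) ((starRingEnd ℂ) c) z := by
  have h1 : HasFDerivAt (fun w : ℂ => (starRingEnd ℂ) w)
      (Complex.conjCLE.toContinuousLinearMap.restrictScalars ℝ) z := by
    exact Complex.conjCLE.hasFDerivAt
  have h2 := h.hasFDerivAt.restrictScalars ℝ
  have h3 := (Complex.conjCLE.hasFDerivAt (x := g ((starRingEnd ℂ) z))).comp z (h2.comp z h1)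
  have := hasFDerivAt_of_restrictScalars ℝ (f' := ContinuousLinearMap.smulRight
      (1 : ℂ →L[ℂ] ℂ) ((starRingEnd ℂ) c)) h3 ?_
  · have h4 := this.hasDerivAt
    simp at h4
    exact h4
  · ext w
    simp [mul_comm, Complex.conjCLE_apply]

/-- if `f` is holomorphic on an open ball `U` centered at `k₀ ∈ ℝ^d ⊂ ℂ^d`,
real-valued on `U ∩ ℝ^d`, and even with respect to `k₀` (`f(k₀+z) = f(k₀-z)`), then
`f(k₀ + iβ)` is real for every `β ∈ ℝ^d` with `k₀ + iβ ∈ U`. -/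
theorem stmt_7 {d : ℕ} (hd : 1 ≤ d) (k₀ : EuclideanSpace ℝ (Fin d)) (R : ℝ) (hR : 0 < R)
    (f : EuclideanSpace ℂ (Fin d) → ℂ)
    (hf : DifferentiableOn ℂ f (ball (toCplx k₀) R))
    (hreal : ∀ v : EuclideanSpace ℝ (Fin d),
      toCplx v ∈ ball (toCplx k₀) R → (f (toCplx v)).im = 0)
    (hsymm : ∀ z : EuclideanSpace ℂ (Fin d),
      toCplx k₀ + z ∈ ball (toCplx k₀) R → toCplx k₀ - z ∈ ball (toCplx k₀) R →
      f (toCplx k₀ + z) = f (toCplx k₀ - z)) :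
    ∀ β : EuclideanSpace ℝ (Fin d),
      toCplx k₀ + Complex.I • toCplx β ∈ ball (toCplx k₀) R →
      (f (toCplx k₀ + Complex.I • toCplx β)).im = 0 := by
  intro β hmem
  set b : EuclideanSpace ℂ (Fin d) := toCplx β with hb
  -- norm of b is less than R
  have hnormIb : ‖Complex.I • b‖ = ‖b‖ := by
    rw [norm_smul, Complex.norm_I, one_mul]
  have hbR : ‖b‖ < R := by
    have := mem_ball_iff_norm.mp hmem
    simpa [hnormIb] using this
  by_cases hb0 : b = 0
  · have h0 : toCplx k₀ ∈ ball (toCplx k₀) R := mem_ball_self hR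
    simpa [hb0] using hreal k₀ h0
  have hbpos : 0 < ‖b‖ := norm_pos_iff.mpr hb0
  set r : ℝ := R / ‖b‖ with hr
  have hr1 : 1 < r := (one_lt_div hbpos).mpr hbR
  have hrpos : 0 < r := lt_trans one_pos hr1
  -- points of the small disk map into the big ball
  have hmap : ∀ t : ℂ, t ∈ ball (0 : ℂ) r → toCplx k₀ + t • b ∈ ball (toCplx k₀) R := by
    intro t ht
    rw [mem_ball_iff_norm] at ht ⊢
    rw [add_sub_cancel_left, norm_smul]
    have : ‖t‖ < r := by simpa using ht
    calc ‖t‖ * ‖b‖ < r * ‖b‖ := by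
          exact mul_lt_mul_of_pos_right this hbpos
      _ = R := by rw [hr, div_mul_cancel₀ R hbpos.ne']
  set g : ℂ → ℂ := fun t => f (toCplx k₀ + t • b) with hg
  -- g is differentiable on the disk
  have hgdiff : DifferentiableOn ℂ g (ball (0 : ℂ) r) := by
    apply DifferentiableOn.comp hf
    · exact (differentiable_const _ |>.add (differentiable_id.smul_const b)).differentiableOn
    · intro t ht; exact hmap t ht
  set h : ℂ → ℂ := fun t => (starRingEnd ℂ) (g ((starRingEnd ℂ) t)) with hh
  have hconjmem : ∀ z : ℂ, z ∈ ball (0 : ℂ) r → (starRingEnd ℂ) z ∈ ball (0 : ℂ) r := by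
    intro z hz
    rw [mem_ball_zero_iff] at hz ⊢
    simpa using hz
  have hhdiff : DifferentiableOn ℂ h (ball (0 : ℂ) r) := by
    intro z hz
    have hz' := hconjmem z hz
    have hd : DifferentiableAt ℂ g ((starRingEnd ℂ) z) :=
      (hgdiff ((starRingEnd ℂ) z) hz').differentiableAt (isOpen_ball.mem_nhds hz')
    exact (hasDerivAt_conj_comp hd.hasDerivAt).differentiableAt.differentiableWithinAt
  -- g is real on real points of the disk
  have hgreal : ∀ x : ℝ, (x : ℂ) ∈ ball (0 : ℂ) r → ((starRingEnd ℂ) (g x) = g x) := by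
    intro x hx
    have hkey : toCplx k₀ + (x : ℂ) • b = toCplx (k₀ + x • β) := by
      ext i
      simp [toCplx, hb, PiLp.add_apply, PiLp.smul_apply]
    have hmem' : toCplx (k₀ + x • β) ∈ ball (toCplx k₀) R := by
      rw [← hkey]; exact hmap _ hx
    have := hreal _ hmem'
    rw [Complex.conj_eq_iff_im]
    show (f (toCplx k₀ + (x:ℂ) • b)).im = 0
    rw [hkey]; exact this
  -- g and h agree frequently near 0
  have hfreq : ∃ᶠ z in nhdsWithin (0 : ℂ) {(0:ℂ)}ᶜ, g z = h z := by
    set u : ℕ → ℂ := fun n => ((r / 2 / (n + 1) : ℝ) : ℂ) with hu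
    have hupos : ∀ n : ℕ, (0:ℝ) < r / 2 / (n + 1) := by
      intro n
      positivity
    have humem : ∀ n : ℕ, u n ∈ ball (0 : ℂ) r := by
      intro n
      rw [mem_ball_zero_iff]
      simp only [hu, Complex.norm_real, Real.norm_eq_abs, abs_of_pos (hupos n)]
      calc r / 2 / (n+1) ≤ r / 2 / 1 := by
            apply div_le_div_of_nonneg_left (le_of_lt (half_pos hrpos)) one_pos
            simp
        _ < r := by linarith
    have htend : Filter.Tendsto u Filter.atTop (nhdsWithin (0 : ℂ) {(0:ℂ)}ᶜ) := by
      apply tendsto_nhdsWithin_of_tendsto_nhds_of_eventually_within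
      · have : Filter.Tendsto (fun n : ℕ => (r / 2 / (n + 1) : ℝ)) Filter.atTop (nhds 0) := by
          apply Filter.Tendsto.div_atTop tendsto_const_nhds
          exact Filter.tendsto_atTop_add_const_right _ 1 tendsto_natCast_atTop_atTop
        have := (Complex.continuous_ofReal.tendsto 0).comp this
        exact this
      · filter_upwards with n
        simp only [Set.mem_compl_iff, Set.mem_singleton_iff, hu]
        exact_mod_cast (hupos n).ne'
    apply htend.frequently
    apply Filter.Frequently.of_forall
    intro n
    have := hgreal (r / 2 / (n + 1)) (humem n)
    simp only [hh, hu]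
    rw [Complex.conj_ofReal]
    exact this.symm
  -- identity theorem
  have hEq : Set.EqOn g h (ball (0 : ℂ) r) := by
    apply AnalyticOnNhd.eqOn_of_preconnected_of_frequently_eq
      (hgdiff.analyticOnNhd isOpen_ball) (hhdiff.analyticOnNhd isOpen_ball)
      (convex_ball _ _).isPreconnected (mem_ball_self hrpos) hfreq
  have hImem : Complex.I ∈ ball (0 : ℂ) r := by
    rw [mem_ball_zero_iff]; simpa using hr1
  have heq1 : g Complex.I = h Complex.I := hEq hImem
  -- evenness : g (-I) = g I
  have heven : g (-Complex.I) = g Complex.I := by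
    have h1 : toCplx k₀ + Complex.I • b ∈ ball (toCplx k₀) R := hmem
    have h2 : toCplx k₀ - Complex.I • b ∈ ball (toCplx k₀) R := by
      rw [mem_ball_iff_norm]
      simpa [hnormIb] using hbR
    have := hsymm (Complex.I • b) h1 h2
    show f (toCplx k₀ + (-Complex.I) • b) = f (toCplx k₀ + Complex.I • b)
    rw [neg_smul, ← sub_eq_add_neg]
    exact this.symm
  have hconj : (starRingEnd ℂ) (g Complex.I) = g Complex.I := by
    conv_rhs => rw [heq1]
    show (starRingEnd ℂ) (g Complex.I) = (starRingEnd ℂ) (g ((starRingEnd ℂ) Complex.I))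
    rw [Complex.conj_I, heven]
  exact Complex.conj_eq_iff_im.mp hconj
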